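/- Let ν be a finite positive measure on ℝ² and η a finite signed measure supported on a set Ω contained in a disk B = D(x,ρ), with η(Ω) = 0 and dist(Ω, supp ν) unrestricted but dist(supp η, supp ν) ≥ ερ. Then ∫ |Rη| dν ≤ [ (2/(ερ)^s)·ν((M/3)B) + (C/M)·sup_{r>0} ν(D(x,r))/r^s ]·|η|(Ω) for any M ≥ 6, where C depends only on s ∈ (1,2). -/

import Mathlib

open MeasureTheory Metric Set
open scoped ENNReal NNReal

private lemma rpow_neg_lip {p r : ℝ} (hp : 1 ≤ p) (hr : 0 < r) {a b : ℝ}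
    (ha : r ≤ a) (hb : r ≤ b) :
    |a ^ (-p) - b ^ (-p)| ≤ p * r ^ (-p - 1) * |a - b| := by
  have H : ∀ t ∈ Set.Ici r, HasDerivWithinAt (fun t : ℝ => t ^ (-p))
      ((-p) * t ^ (-p - 1)) (Set.Ici r) t := by
    intro t ht
    have ht0 : t ≠ 0 := by have := lt_of_lt_of_le hr ht; positivity
    exact (Real.hasDerivAt_rpow_const (Or.inl ht0)).hasDerivWithinAt
  have hbound : ∀ t ∈ Set.Ici r, ‖(-p) * t ^ (-p - 1)‖ ≤ p * r ^ (-p - 1) := by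
    intro t ht
    have ht0 : (0:ℝ) < t := lt_of_lt_of_le hr ht
    rw [norm_mul, norm_neg, Real.norm_eq_abs, Real.norm_eq_abs,
      abs_of_nonneg (by linarith), abs_of_nonneg (Real.rpow_nonneg ht0.le _)]
    have : t ^ (-p - 1) ≤ r ^ (-p - 1) :=
      Real.rpow_le_rpow_of_nonpos hr ht (by linarith)
    nlinarith [Real.rpow_nonneg ht0.le (-p - 1)]
  have := (convex_Ici r).norm_image_sub_le_of_norm_hasDerivWithin_le H hbound hb ha
  simpa [Real.norm_eq_abs, abs_sub_comm] using this

private lemma norm_kernel_le {s d : ℝ} (hs : 0 < s) {E : Type*} [NormedAddCommGroup E]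
    [NormedSpace ℝ E] (w : E) (hd : 0 < d) (hw : d ≤ ‖w‖) :
    ‖‖w‖ ^ (-(s+1)) • w‖ ≤ d ^ (-s) := by
  have hw0 : 0 < ‖w‖ := hd.trans_le hw
  rw [norm_smul, Real.norm_eq_abs, abs_of_nonneg (Real.rpow_nonneg (norm_nonneg w) _)]
  have h1 : ‖w‖ ^ (-(s+1)) * ‖w‖ = ‖w‖ ^ (-s) := by
    nth_rewrite 2 [← Real.rpow_one ‖w‖]
    rw [← Real.rpow_add hw0]; ring_nf
  rw [h1]
  exact Real.rpow_le_rpow_of_nonpos hd hw (by linarith)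

private lemma kdiff {s : ℝ} (hs1 : 1 < s) {r : ℝ} (hr : 0 < r) {E : Type*}
    [NormedAddCommGroup E] [NormedSpace ℝ E] (u v : E)
    (hu : r ≤ ‖u‖) (hv : r ≤ ‖v‖) (hv2 : ‖v‖ ≤ 2 * r) :
    ‖‖u‖ ^ (-(s+1)) • u - ‖v‖ ^ (-(s+1)) • v‖ ≤ (2*s+3) * r ^ (-(s+1)) * ‖u - v‖ := by
  have key : ‖u‖ ^ (-(s+1)) • u - ‖v‖ ^ (-(s+1)) • v
      = ‖u‖ ^ (-(s+1)) • (u - v) + (‖u‖ ^ (-(s+1)) - ‖v‖ ^ (-(s+1))) • v := by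
    rw [smul_sub, sub_smul]; abel
  have hu0 : (0:ℝ) < ‖u‖ := hr.trans_le hu
  have hlip : |‖u‖ ^ (-(s+1)) - ‖v‖ ^ (-(s+1))| ≤ (s+1) * r ^ (-(s+1) - 1) * |‖u‖ - ‖v‖| :=
    rpow_neg_lip (by linarith) hr hu hv
  have habs : |‖u‖ - ‖v‖| ≤ ‖u - v‖ := abs_norm_sub_norm_le u v
  have hterm1 : ‖‖u‖ ^ (-(s+1)) • (u - v)‖ ≤ r ^ (-(s+1)) * ‖u - v‖ := by
    rw [norm_smul, Real.norm_eq_abs, abs_of_nonneg (Real.rpow_nonneg (norm_nonneg u) _)]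
    have := Real.rpow_le_rpow_of_nonpos hr hu (show -(s+1) ≤ 0 by linarith)
    nlinarith [norm_nonneg (u - v)]
  have hterm2 : ‖(‖u‖ ^ (-(s+1)) - ‖v‖ ^ (-(s+1))) • v‖ ≤ (2*s+2) * r ^ (-(s+1)) * ‖u - v‖ := by
    rw [norm_smul, Real.norm_eq_abs]
    have h2 : r ^ (-(s+1) - 1) * (2 * r) = 2 * r ^ (-(s+1)) := by
      rw [show (-(s+1) - 1) = (-(s+1)) + (-1) by ring, Real.rpow_add hr, Real.rpow_neg_one]
      field_simp
    calc |‖u‖ ^ (-(s+1)) - ‖v‖ ^ (-(s+1))| * ‖v‖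
        ≤ ((s+1) * r ^ (-(s+1) - 1) * ‖u - v‖) * (2 * r) := by
          apply mul_le_mul (hlip.trans ?_) hv2 (norm_nonneg v) ?_
          · have hx : (0:ℝ) ≤ (s+1) * r ^ (-(s+1) - 1) := by positivity
            nlinarith [abs_nonneg (‖u‖ - ‖v‖)]
          · positivity
      _ = (s+1) * (r ^ (-(s+1) - 1) * (2 * r)) * ‖u - v‖ := by ring
      _ = (2*s+2) * r ^ (-(s+1)) * ‖u - v‖ := by rw [h2]; ring
  calc ‖‖u‖ ^ (-(s+1)) • u - ‖v‖ ^ (-(s+1)) • v‖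
      ≤ ‖‖u‖ ^ (-(s+1)) • (u - v)‖ + ‖(‖u‖ ^ (-(s+1)) - ‖v‖ ^ (-(s+1))) • v‖ := by
        rw [key]; exact norm_add_le _ _
    _ ≤ r ^ (-(s+1)) * ‖u - v‖ + (2*s+2) * r ^ (-(s+1)) * ‖u - v‖ := add_le_add hterm1 hterm2
    _ = (2*s+3) * r ^ (-(s+1)) * ‖u - v‖ := by ring

private lemma tail_lintegral {s G R : ℝ} (hs1 : 1 < s) (hR : 0 < R) (hG0 : 0 ≤ G)
    (ν : Measure (EuclideanSpace ℝ (Fin 2))) [IsFiniteMeasure ν]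
    (x : EuclideanSpace ℝ (Fin 2))
    (hG : ∀ r : ℝ, 0 < r → (ν (Metric.closedBall x r)).toReal ≤ G * r ^ s) :
    ∫⁻ z in (Metric.closedBall x R)ᶜ, ENNReal.ofReal (‖z - x‖ ^ (-(s+1))) ∂ν
      ≤ ENNReal.ofReal (2 ^ (s+1) * G / R) := by
  set A : ℕ → Set (EuclideanSpace ℝ (Fin 2)) :=
    fun k => closedBall x (2^(k+1) * R) \ closedBall x (2^k * R) with hA
  have hcnn : (0:ℝ) ≤ 2^s * G / R :=
    div_nonneg (mul_nonneg (Real.rpow_nonneg two_pos.le _) hG0) hR.le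
  have hcover : (closedBall x R)ᶜ ⊆ ⋃ k, A k := by
    intro z hz
    have hz' : R < dist z x := by simpa [not_le] using hz
    have hex : ∃ k : ℕ, dist z x ≤ 2 ^ (k+1) * R := by
      obtain ⟨n, hn⟩ := pow_unbounded_of_one_lt (dist z x / R) (one_lt_two (α := ℝ))
      rw [div_lt_iff₀ hR] at hn
      have h2 : (2:ℝ)^(n+1) = 2*2^n := by ring
      exact ⟨n, by nlinarith [pow_pos (zero_lt_two (α := ℝ)) n]⟩
    have hk1 : dist z x ≤ 2 ^ (Nat.find hex + 1) * R := Nat.find_spec hex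
    have hk2 : 2 ^ (Nat.find hex) * R < dist z x := by
      rcases Nat.eq_zero_or_pos (Nat.find hex) with h0 | hpos
      · rw [h0]; simpa using hz'
      · have hmin := Nat.find_min hex (Nat.sub_lt hpos one_pos)
        rw [show Nat.find hex - 1 + 1 = Nat.find hex from by omega] at hmin
        exact not_le.1 hmin
    exact mem_iUnion.2 ⟨Nat.find hex, ⟨mem_closedBall.2 hk1,
      fun h => absurd (mem_closedBall.1 h) (not_le.2 hk2)⟩⟩
  have hpera : ∀ k : ℕ, ∫⁻ z in A k, ENNReal.ofReal (‖z - x‖ ^ (-(s+1))) ∂ν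
      ≤ ENNReal.ofReal ((2^s * G / R) * (1/2)^k) := by
    intro k
    have hak : (0:ℝ) < 2^k * R := by positivity
    have hak1 : (0:ℝ) < 2^(k+1) * R := by positivity
    have hmeasA : MeasurableSet (A k) := measurableSet_closedBall.diff measurableSet_closedBall
    have hb2 : ν (closedBall x (2^(k+1)*R)) ≤ ENNReal.ofReal (G * (2^(k+1)*R) ^ s) := by
      rw [ENNReal.le_ofReal_iff_toReal_le (measure_ne_top ν _)
        (mul_nonneg hG0 (Real.rpow_nonneg hak1.le _))]
      exact hG _ hak1
    have hreal : (2^k*R) ^ (-(s+1)) * (G * (2^(k+1)*R) ^ s) = (2^s*G/R) * (1/2)^k := by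
      have h2a : (2:ℝ)^(k+1) * R = 2 * (2^k * R) := by ring
      rw [h2a, Real.mul_rpow two_pos.le hak.le,
        show ((2:ℝ)^k*R) ^ (-(s+1)) * (G * ((2:ℝ) ^ s * ((2:ℝ)^k*R) ^ s))
          = G * 2^s * (((2:ℝ)^k*R) ^ (-(s+1)) * ((2:ℝ)^k*R) ^ s) from by ring,
        ← Real.rpow_add hak, show -(s+1)+s = -1 from by ring, Real.rpow_neg_one]
      rw [one_div, inv_pow, mul_inv]
      field_simp
    calc ∫⁻ z in A k, ENNReal.ofReal (‖z - x‖ ^ (-(s+1))) ∂ν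
        ≤ ∫⁻ _ in A k, ENNReal.ofReal ((2^k * R) ^ (-(s+1))) ∂ν := by
          apply setLIntegral_mono' hmeasA
          intro z hz
          apply ENNReal.ofReal_le_ofReal
          have hzd : 2^k * R ≤ ‖z - x‖ := by
            have h2 := hz.2
            rw [mem_closedBall, not_le] at h2
            rw [← dist_eq_norm]
            exact h2.le
          exact Real.rpow_le_rpow_of_nonpos hak hzd (by linarith)
      _ = ENNReal.ofReal ((2^k*R) ^ (-(s+1))) * ν (A k) := setLIntegral_const _ _
      _ ≤ ENNReal.ofReal ((2^k*R) ^ (-(s+1))) * ENNReal.ofReal (G * (2^(k+1)*R) ^ s) := by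
          gcongr
          exact le_trans (measure_mono diff_subset) hb2
      _ = ENNReal.ofReal ((2^k*R) ^ (-(s+1)) * (G * (2^(k+1)*R) ^ s)) :=
          (ENNReal.ofReal_mul (Real.rpow_nonneg hak.le _)).symm
      _ = ENNReal.ofReal ((2^s*G/R) * (1/2)^k) := by rw [hreal]
  calc ∫⁻ z in (closedBall x R)ᶜ, ENNReal.ofReal (‖z - x‖ ^ (-(s+1))) ∂ν
      ≤ ∫⁻ z in ⋃ k, A k, ENNReal.ofReal (‖z - x‖ ^ (-(s+1))) ∂ν := lintegral_mono_set hcover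
    _ ≤ ∑' k, ∫⁻ z in A k, ENNReal.ofReal (‖z - x‖ ^ (-(s+1))) ∂ν := lintegral_iUnion_le _ _
    _ ≤ ∑' k : ℕ, ENNReal.ofReal ((2^s*G/R) * (1/2)^k) := ENNReal.tsum_le_tsum hpera
    _ = ENNReal.ofReal (2^s*G/R) * ∑' k : ℕ, (ENNReal.ofReal (1/2))^k := by
        rw [← ENNReal.tsum_mul_left]
        exact tsum_congr fun k => by
          rw [ENNReal.ofReal_mul hcnn, ENNReal.ofReal_pow (by norm_num)]
    _ = ENNReal.ofReal (2^s*G/R) * 2 := by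
        rw [ENNReal.tsum_geometric]
        congr 1
        rw [show ((1:ℝ)/2) = ((2:ℝ))⁻¹ from by norm_num, ENNReal.ofReal_inv_of_pos two_pos,
          ENNReal.ofReal_ofNat, ENNReal.one_sub_inv_two, inv_inv]
    _ = ENNReal.ofReal (2^(s+1) * G / R) := by
        rw [show (2:ℝ≥0∞) = ENNReal.ofReal 2 from (ENNReal.ofReal_ofNat 2).symm,
          ← ENNReal.ofReal_mul hcnn]
        congr 1
        rw [Real.rpow_add two_pos, Real.rpow_one]; ring

private lemma meas_aux1 {t : ℝ} (ht : 0 ≤ t) (x : EuclideanSpace ℝ (Fin 2)) :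
    Measurable (fun z : EuclideanSpace ℝ (Fin 2) => ‖z - x‖ ^ (-t)) := by
  have h : (fun z : EuclideanSpace ℝ (Fin 2) => ‖z - x‖ ^ (-t))
      = fun z => (‖z - x‖ ^ t)⁻¹ := by
    funext z; rw [Real.rpow_neg (norm_nonneg _)]
  rw [h]
  exact (((Real.continuous_rpow_const ht).comp
    (continuous_id.sub continuous_const).norm).measurable).inv

private lemma meas_aux2 {t : ℝ} (ht : 0 ≤ t) (z : EuclideanSpace ℝ (Fin 2)) :
    Measurable (fun y : EuclideanSpace ℝ (Fin 2) => ‖z - y‖ ^ (-t)) := by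
  have h : (fun y : EuclideanSpace ℝ (Fin 2) => ‖z - y‖ ^ (-t))
      = fun y => (‖z - y‖ ^ t)⁻¹ := by
    funext y; rw [Real.rpow_neg (norm_nonneg _)]
  rw [h]
  exact (((Real.continuous_rpow_const ht).comp
    (continuous_const.sub continuous_id).norm).measurable).inv

set_option maxHeartbeats 1000000 in
/-- Dual form of the oscillation bound. Let `ν` be a finite positive measure
supported on `sν`, and `η = ηp - ηm` a finite signed measure supported on `Ω ⊆ B = D(x,ρ)`
with `η(Ω) = 0` and `dist(supp η, supp ν) ≥ ε ρ`. Then for `M ≥ 6`, `s ∈ (1,2)`, and any `G`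
with `ν(D(x,r)) ≤ G r^s` for all `r > 0`,
`∫ |Rη| dν ≤ [2/(ερ)^s · ν((M/3)B) + (C/M) · G] · |η|(Ω)` with `C = C(s)`. -/
theorem stmt11 (s : ℝ) (hs : 1 < s ∧ s < 2) :
    ∃ C > 0, ∀ (ν ηp ηm : Measure (EuclideanSpace ℝ (Fin 2))),
      IsFiniteMeasure ν → IsFiniteMeasure ηp → IsFiniteMeasure ηm →
      ∀ (sν Ω : Set (EuclideanSpace ℝ (Fin 2))) (x : EuclideanSpace ℝ (Fin 2)) (ρ ε M G : ℝ),
      0 < ρ → 0 < ε → ε < 1 → 6 ≤ M →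
      Ω ⊆ Metric.closedBall x ρ →
      ηp Ωᶜ = 0 → ηm Ωᶜ = 0 → ηp Ω = ηm Ω →
      ν sνᶜ = 0 →
      (∀ y ∈ Ω, ∀ z ∈ sν, ε * ρ ≤ dist y z) →
      (∀ r : ℝ, 0 < r → (ν (Metric.closedBall x r)).toReal ≤ G * r ^ s) →
      ∫ z, ‖(∫ y, ‖z - y‖ ^ (-(s + 1)) • (z - y) ∂ηp)
              - ∫ y, ‖z - y‖ ^ (-(s + 1)) • (z - y) ∂ηm‖ ∂ν
        ≤ (2 / (ε * ρ) ^ s * (ν (Metric.closedBall x (M / 3 * ρ))).toReal + C / M * G)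
            * ((ηp + ηm) Ω).toReal := by
  obtain ⟨hs1, hs2⟩ := hs
  have h2pos : (0:ℝ) < 2 ^ (s+1) := Real.rpow_pos_of_pos two_pos _
  set cc : ℝ := (2*s+3) * 2 ^ (s+1) with hcc
  have hccpos : 0 < cc := mul_pos (by linarith) h2pos
  refine ⟨3 * 2 ^ (s+1) * cc, by positivity, ?_⟩
  intro ν ηp ηm hνf hηpf hηmf sν Ω x ρ ε M G hρ hε hε1 hM hΩB hηpc hηmc hbal hνc hdist hG
  have hG0 : 0 ≤ G := by
    have h := hG 1 one_pos
    have h2 := ENNReal.toReal_nonneg (a := ν (Metric.closedBall x 1))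
    rw [Real.one_rpow, mul_one] at h
    linarith
  have hM0 : (0:ℝ) < M := by linarith
  have hR0 : 0 < M/3*ρ := by positivity
  have hRρ : 2*ρ ≤ M/3*ρ := by nlinarith
  have hερ : 0 < ε * ρ := mul_pos hε hρ
  have huniv : ∀ (μ : Measure (EuclideanSpace ℝ (Fin 2))), μ Ωᶜ = 0 → μ Ω = μ Set.univ := by
    intro μ h
    refine le_antisymm (measure_mono (Set.subset_univ _)) ?_
    calc μ Set.univ = μ (Ω ∪ Ωᶜ) := by rw [Set.union_compl_self]
      _ ≤ μ Ω + μ Ωᶜ := measure_union_le _ _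
      _ = μ Ω := by rw [h, add_zero]
  have hT : ((ηp + ηm) Ω).toReal = (ηp Set.univ).toReal + (ηm Set.univ).toReal := by
    rw [Measure.add_apply, huniv ηp hηpc, huniv ηm hηmc,
      ENNReal.toReal_add (measure_ne_top _ _) (measure_ne_top _ _)]
  have hTbal : (ηp Set.univ).toReal = (ηm Set.univ).toReal := by
    rw [← huniv ηp hηpc, ← huniv ηm hηmc, hbal]
  set Tp := (ηp Set.univ).toReal with hTp
  set Tm := (ηm Set.univ).toReal with hTm
  have hTp0 : 0 ≤ Tp := ENNReal.toReal_nonneg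
  have hTm0 : 0 ≤ Tm := ENNReal.toReal_nonneg
  have haeν : ∀ᵐ z ∂ν, z ∈ sν := by
    rw [MeasureTheory.ae_iff]
    simpa [Set.compl_def] using hνc
  have haeΩ : ∀ (μ : Measure (EuclideanSpace ℝ (Fin 2))), μ Ωᶜ = 0 → ∀ᵐ y ∂μ, y ∈ Ω := by
    intro μ h
    rw [MeasureTheory.ae_iff]
    simpa [Set.compl_def] using h
  have hKmeas : ∀ z : EuclideanSpace ℝ (Fin 2),
      StronglyMeasurable (fun y : EuclideanSpace ℝ (Fin 2) => ‖z - y‖ ^ (-(s+1)) • (z - y)) := by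
    intro z
    apply Measurable.stronglyMeasurable
    exact (meas_aux2 (show (0:ℝ) ≤ s+1 by linarith) z).smul
      (measurable_const.sub measurable_id)
  have hKint : ∀ (μ : Measure (EuclideanSpace ℝ (Fin 2))), IsFiniteMeasure μ → μ Ωᶜ = 0 →
      ∀ (z : EuclideanSpace ℝ (Fin 2)) (d : ℝ), 0 < d → (∀ y ∈ Ω, d ≤ ‖z - y‖) →
      Integrable (fun y => ‖z - y‖ ^ (-(s+1)) • (z - y)) μ := by
    intro μ hf hμ z d hd hb
    haveI := hf
    refine Integrable.mono' (integrable_const (d ^ (-s)))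
      ((hKmeas z).aestronglyMeasurable) ?_
    filter_upwards [haeΩ μ hμ] with y hy
    exact norm_kernel_le (by linarith) _ hd (hb y hy)
  have hnormint : ∀ (μ : Measure (EuclideanSpace ℝ (Fin 2))), IsFiniteMeasure μ → μ Ωᶜ = 0 →
      ∀ (z : EuclideanSpace ℝ (Fin 2)) (d : ℝ), 0 < d → (∀ y ∈ Ω, d ≤ ‖z - y‖) →
      ‖∫ y, ‖z - y‖ ^ (-(s+1)) • (z - y) ∂μ‖ ≤ d ^ (-s) * (μ Set.univ).toReal := by
    intro μ hf hμ z d hd hb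
    haveI := hf
    apply norm_integral_le_of_norm_le_const
    filter_upwards [haeΩ μ hμ] with y hy
    exact norm_kernel_le (by linarith) _ hd (hb y hy)
  -- near bound
  have hnear : ∀ z ∈ sν,
      ‖(∫ y, ‖z - y‖ ^ (-(s+1)) • (z - y) ∂ηp) - ∫ y, ‖z - y‖ ^ (-(s+1)) • (z - y) ∂ηm‖
        ≤ (ε*ρ) ^ (-s) * (Tp + Tm) := by
    intro z hz
    have hb : ∀ y ∈ Ω, ε*ρ ≤ ‖z - y‖ := by
      intro y hy
      have := hdist y hy z hz
      rwa [dist_comm, dist_eq_norm] at this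
    calc ‖(∫ y, ‖z - y‖ ^ (-(s+1)) • (z - y) ∂ηp) - ∫ y, ‖z - y‖ ^ (-(s+1)) • (z - y) ∂ηm‖
        ≤ ‖∫ y, ‖z - y‖ ^ (-(s+1)) • (z - y) ∂ηp‖
          + ‖∫ y, ‖z - y‖ ^ (-(s+1)) • (z - y) ∂ηm‖ := norm_sub_le _ _
      _ ≤ (ε*ρ) ^ (-s) * Tp + (ε*ρ) ^ (-s) * Tm :=
          add_le_add (hnormint ηp hηpf hηpc z _ hερ hb) (hnormint ηm hηmf hηmc z _ hερ hb)
      _ = (ε*ρ) ^ (-s) * (Tp + Tm) := by ring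
  -- far bound
  have hfar : ∀ z : EuclideanSpace ℝ (Fin 2), z ∉ Metric.closedBall x (M/3*ρ) →
      ‖(∫ y, ‖z - y‖ ^ (-(s+1)) • (z - y) ∂ηp) - ∫ y, ‖z - y‖ ^ (-(s+1)) • (z - y) ∂ηm‖
        ≤ cc * ρ * ‖z - x‖ ^ (-(s+1)) * (Tp + Tm) := by
    intro z hz
    have hzx : M/3*ρ < ‖z - x‖ := by
      rw [← dist_eq_norm]
      simpa [Metric.mem_closedBall, not_le] using hz
    have h2ρ : 2 * ρ < ‖z - x‖ := lt_of_le_of_lt hRρ hzx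
    have hr0 : 0 < ‖z - x‖ - ρ := by linarith
    have hby : ∀ y ∈ Ω, ‖z - x‖ - ρ ≤ ‖z - y‖ := by
      intro y hy
      have h1 : ‖y - x‖ ≤ ρ := by
        have := hΩB hy
        rwa [Metric.mem_closedBall, dist_eq_norm] at this
      have h2 := norm_add_le (z - y) (y - x)
      rw [sub_add_sub_cancel] at h2
      linarith
    have hrr : (‖z - x‖ - ρ) ^ (-(s+1)) ≤ 2 ^ (s+1) * ‖z - x‖ ^ (-(s+1)) := by
      have h3 : ‖z - x‖ / 2 ≤ ‖z - x‖ - ρ := by linarith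
      have h4 : (0:ℝ) < ‖z - x‖ / 2 := by linarith
      calc (‖z - x‖ - ρ) ^ (-(s+1)) ≤ (‖z - x‖ / 2) ^ (-(s+1)) :=
            Real.rpow_le_rpow_of_nonpos h4 h3 (by linarith)
        _ = 2 ^ (s+1) * ‖z - x‖ ^ (-(s+1)) := by
            rw [Real.div_rpow (by linarith) two_pos.le, Real.rpow_neg two_pos.le,
              div_inv_eq_mul]
            ring
    have hDb : ∀ y ∈ Ω, ‖(‖z - y‖ ^ (-(s+1)) • (z - y)) - (‖z - x‖ ^ (-(s+1)) • (z - x))‖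
        ≤ cc * ρ * ‖z - x‖ ^ (-(s+1)) := by
      intro y hy
      have h1 := kdiff hs1 hr0 (z - y) (z - x) (hby y hy) (by linarith) (by linarith)
      have hxy : ‖(z - y) - (z - x)‖ ≤ ρ := by
        rw [show (z - y) - (z - x) = -(y - x) from by abel, norm_neg]
        have := hΩB hy
        rwa [Metric.mem_closedBall, dist_eq_norm] at this
      have hbase : (0:ℝ) ≤ ‖z - x‖ ^ (-(s+1)) := Real.rpow_nonneg (norm_nonneg _) _
      calc ‖(‖z - y‖ ^ (-(s+1)) • (z - y)) - (‖z - x‖ ^ (-(s+1)) • (z - x))‖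
          ≤ (2*s+3) * (‖z - x‖ - ρ) ^ (-(s+1)) * ‖(z - y) - (z - x)‖ := h1
        _ ≤ (2*s+3) * (2 ^ (s+1) * ‖z - x‖ ^ (-(s+1))) * ρ := by
            apply mul_le_mul _ hxy (norm_nonneg _)
            · exact mul_nonneg (by linarith) (by positivity)
            · exact mul_le_mul_of_nonneg_left hrr (by linarith)
        _ = cc * ρ * ‖z - x‖ ^ (-(s+1)) := by rw [hcc]; ring
    have hintp : Integrable (fun y => ‖z - y‖ ^ (-(s+1)) • (z - y)) ηp :=
      hKint ηp hηpf hηpc z _ hr0 hby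
    have hintm : Integrable (fun y => ‖z - y‖ ^ (-(s+1)) • (z - y)) ηm :=
      hKint ηm hηmf hηmc z _ hr0 hby
    have heqp : ∫ y, (‖z - y‖ ^ (-(s+1)) • (z - y) - ‖z - x‖ ^ (-(s+1)) • (z - x)) ∂ηp
        = (∫ y, ‖z - y‖ ^ (-(s+1)) • (z - y) ∂ηp) - Tp • (‖z - x‖ ^ (-(s+1)) • (z - x)) := by
      rw [integral_sub hintp (integrable_const _), integral_const, measureReal_def, ← hTp]
    have heqm : ∫ y, (‖z - y‖ ^ (-(s+1)) • (z - y) - ‖z - x‖ ^ (-(s+1)) • (z - x)) ∂ηm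
        = (∫ y, ‖z - y‖ ^ (-(s+1)) • (z - y) ∂ηm) - Tm • (‖z - x‖ ^ (-(s+1)) • (z - x)) := by
      rw [integral_sub hintm (integrable_const _), integral_const, measureReal_def, ← hTm]
    have heq : (∫ y, ‖z - y‖ ^ (-(s+1)) • (z - y) ∂ηp)
          - ∫ y, ‖z - y‖ ^ (-(s+1)) • (z - y) ∂ηm
        = (∫ y, (‖z - y‖ ^ (-(s+1)) • (z - y) - ‖z - x‖ ^ (-(s+1)) • (z - x)) ∂ηp)
          - ∫ y, (‖z - y‖ ^ (-(s+1)) • (z - y) - ‖z - x‖ ^ (-(s+1)) • (z - x)) ∂ηm := by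
      rw [heqp, heqm, hTbal]
      abel
    rw [heq]
    have hbp : ‖∫ y, (‖z - y‖ ^ (-(s+1)) • (z - y) - ‖z - x‖ ^ (-(s+1)) • (z - x)) ∂ηp‖
        ≤ cc * ρ * ‖z - x‖ ^ (-(s+1)) * Tp := by
      apply norm_integral_le_of_norm_le_const
      filter_upwards [haeΩ ηp hηpc] with y hy
      exact hDb y hy
    have hbm : ‖∫ y, (‖z - y‖ ^ (-(s+1)) • (z - y) - ‖z - x‖ ^ (-(s+1)) • (z - x)) ∂ηm‖
        ≤ cc * ρ * ‖z - x‖ ^ (-(s+1)) * Tm := by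
      apply norm_integral_le_of_norm_le_const
      filter_upwards [haeΩ ηm hηmc] with y hy
      exact hDb y hy
    calc ‖(∫ y, (‖z - y‖ ^ (-(s+1)) • (z - y) - ‖z - x‖ ^ (-(s+1)) • (z - x)) ∂ηp)
          - ∫ y, (‖z - y‖ ^ (-(s+1)) • (z - y) - ‖z - x‖ ^ (-(s+1)) • (z - x)) ∂ηm‖
        ≤ ‖∫ y, (‖z - y‖ ^ (-(s+1)) • (z - y) - ‖z - x‖ ^ (-(s+1)) • (z - x)) ∂ηp‖
          + ‖∫ y, (‖z - y‖ ^ (-(s+1)) • (z - y) - ‖z - x‖ ^ (-(s+1)) • (z - x)) ∂ηm‖ :=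
          norm_sub_le _ _
      _ ≤ cc * ρ * ‖z - x‖ ^ (-(s+1)) * Tp + cc * ρ * ‖z - x‖ ^ (-(s+1)) * Tm :=
          add_le_add hbp hbm
      _ = cc * ρ * ‖z - x‖ ^ (-(s+1)) * (Tp + Tm) := by ring
  -- the dominating function
  set B' := Metric.closedBall x (M/3*ρ) with hB'
  set c2 : ℝ := cc * ρ * (Tp + Tm) with hc2
  have hc20 : 0 ≤ c2 := by positivity
  set g1 : EuclideanSpace ℝ (Fin 2) → ℝ :=
    Set.indicator B' (fun _ => (ε*ρ) ^ (-s) * (Tp + Tm)) with hg1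
  set g2 : EuclideanSpace ℝ (Fin 2) → ℝ :=
    Set.indicator B'ᶜ (fun z => c2 * ‖z - x‖ ^ (-(s+1))) with hg2
  have hbase_meas : Measurable (fun z : EuclideanSpace ℝ (Fin 2) => ‖z - x‖ ^ (-(s+1))) :=
    meas_aux1 (show (0:ℝ) ≤ s+1 by linarith) x
  have hg1int : Integrable g1 ν := (integrable_const _).indicator measurableSet_closedBall
  have htail := tail_lintegral hs1 hR0 hG0 ν x hG
  have hlin : ∫⁻ z, ENNReal.ofReal (g2 z) ∂ν
      ≤ ENNReal.ofReal (c2 * (2 ^ (s+1) * G / (M/3*ρ))) := by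
    have hstep : ∫⁻ z, ENNReal.ofReal (g2 z) ∂ν
        = ENNReal.ofReal c2 * ∫⁻ z in B'ᶜ, ENNReal.ofReal (‖z - x‖ ^ (-(s+1))) ∂ν := by
      have e1 : (fun z => ENNReal.ofReal (g2 z))
          = Set.indicator B'ᶜ
            (fun z => ENNReal.ofReal c2 * ENNReal.ofReal (‖z - x‖ ^ (-(s+1)))) := by
        funext z
        by_cases hz : z ∈ B'ᶜ
        · simp only [hg2, Set.indicator_of_mem hz]
          rw [ENNReal.ofReal_mul hc20]
        · simp [hg2, Set.indicator_of_notMem hz]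
      rw [e1, lintegral_indicator measurableSet_closedBall.compl,
        lintegral_const_mul _ hbase_meas.ennreal_ofReal]
    rw [hstep]
    calc ENNReal.ofReal c2 * ∫⁻ z in B'ᶜ, ENNReal.ofReal (‖z - x‖ ^ (-(s+1))) ∂ν
        ≤ ENNReal.ofReal c2 * ENNReal.ofReal (2 ^ (s+1) * G / (M/3*ρ)) :=
          mul_le_mul' le_rfl htail
      _ = ENNReal.ofReal (c2 * (2 ^ (s+1) * G / (M/3*ρ))) := (ENNReal.ofReal_mul hc20).symm
  have hg2nonneg : ∀ z, 0 ≤ g2 z := by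
    intro z
    apply Set.indicator_nonneg
    intro z _
    exact mul_nonneg hc20 (Real.rpow_nonneg (norm_nonneg _) _)
  have hg2meas : AEStronglyMeasurable g2 ν :=
    ((measurable_const.mul hbase_meas).indicator
      measurableSet_closedBall.compl).aestronglyMeasurable
  have hg2int : Integrable g2 ν := by
    constructor
    · exact hg2meas
    · rw [hasFiniteIntegral_iff_norm]
      calc ∫⁻ z, ENNReal.ofReal ‖g2 z‖ ∂ν = ∫⁻ z, ENNReal.ofReal (g2 z) ∂ν := by
            congr 1
            funext z
            rw [Real.norm_of_nonneg (hg2nonneg z)]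
        _ ≤ ENNReal.ofReal (c2 * (2 ^ (s+1) * G / (M/3*ρ))) := hlin
        _ < ⊤ := ENNReal.ofReal_lt_top
  have hg2val : ∫ z, g2 z ∂ν ≤ c2 * (2 ^ (s+1) * G / (M/3*ρ)) := by
    rw [integral_eq_lintegral_of_nonneg_ae (Filter.Eventually.of_forall hg2nonneg) hg2meas]
    have h0 : 0 ≤ c2 * (2 ^ (s+1) * G / (M/3*ρ)) := by
      apply mul_nonneg hc20
      apply div_nonneg _ hR0.le
      exact mul_nonneg h2pos.le hG0
    calc (∫⁻ z, ENNReal.ofReal (g2 z) ∂ν).toReal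
        ≤ (ENNReal.ofReal (c2 * (2 ^ (s+1) * G / (M/3*ρ)))).toReal :=
          ENNReal.toReal_mono ENNReal.ofReal_ne_top hlin
      _ = c2 * (2 ^ (s+1) * G / (M/3*ρ)) := ENNReal.toReal_ofReal h0
  have hg1val : ∫ z, g1 z ∂ν = (ν B').toReal • ((ε*ρ) ^ (-s) * (Tp + Tm)) := by
    rw [hg1, integral_indicator_const _ measurableSet_closedBall, measureReal_def]
  -- main comparison
  have hfg : ∀ᵐ z ∂ν,
      ‖(∫ y, ‖z - y‖ ^ (-(s+1)) • (z - y) ∂ηp) - ∫ y, ‖z - y‖ ^ (-(s+1)) • (z - y) ∂ηm‖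
        ≤ g1 z + g2 z := by
    filter_upwards [haeν] with z hz
    by_cases hzB : z ∈ B'
    · have : g1 z + g2 z = (ε*ρ) ^ (-s) * (Tp + Tm) := by
        rw [hg1, hg2, Set.indicator_of_mem hzB,
          Set.indicator_of_notMem (by simpa using hzB : z ∉ B'ᶜ), add_zero]
      rw [this]
      exact hnear z hz
    · have : g1 z + g2 z = c2 * ‖z - x‖ ^ (-(s+1)) := by
        rw [hg1, hg2, Set.indicator_of_notMem hzB,
          Set.indicator_of_mem (Set.mem_compl hzB), zero_add]
      rw [this, hc2]
      calc ‖(∫ y, ‖z - y‖ ^ (-(s+1)) • (z - y) ∂ηp) - ∫ y, ‖z - y‖ ^ (-(s+1)) • (z - y) ∂ηm‖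
          ≤ cc * ρ * ‖z - x‖ ^ (-(s+1)) * (Tp + Tm) := hfar z hzB
        _ = cc * ρ * (Tp + Tm) * ‖z - x‖ ^ (-(s+1)) := by ring
  have hmain : ∫ z, ‖(∫ y, ‖z - y‖ ^ (-(s+1)) • (z - y) ∂ηp)
        - ∫ y, ‖z - y‖ ^ (-(s+1)) • (z - y) ∂ηm‖ ∂ν
      ≤ ∫ z, (g1 z + g2 z) ∂ν :=
    integral_mono_of_nonneg (Filter.Eventually.of_forall fun z => norm_nonneg _)
      (hg1int.add hg2int) hfg
  rw [integral_add hg1int hg2int] at hmain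
  refine le_trans hmain ?_
  rw [hT, hg1val]
  have hfinal : (ν B').toReal • ((ε*ρ) ^ (-s) * (Tp + Tm)) + ∫ z, g2 z ∂ν
      ≤ (2 / (ε * ρ) ^ s * (ν B').toReal + 3 * 2 ^ (s+1) * cc / M * G) * (Tp + Tm) := by
    have hν0 : 0 ≤ (ν B').toReal := ENNReal.toReal_nonneg
    have hx : (0:ℝ) < (ε*ρ) ^ s := Real.rpow_pos_of_pos hερ _
    have hneg : (ε*ρ) ^ (-s) = ((ε*ρ) ^ s)⁻¹ := Real.rpow_neg hερ.le _
    have h1 : (ν B').toReal • ((ε*ρ) ^ (-s) * (Tp + Tm))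
        ≤ 2 / (ε * ρ) ^ s * (ν B').toReal * (Tp + Tm) := by
      rw [smul_eq_mul, hneg]
      rw [div_eq_mul_inv]
      nlinarith [mul_nonneg hν0 (add_nonneg hTp0 hTm0), inv_nonneg.2 hx.le]
    have h2 : ∫ z, g2 z ∂ν ≤ 3 * 2 ^ (s+1) * cc / M * G * (Tp + Tm) := by
      refine le_trans hg2val ?_
      rw [hc2]
      have : cc * ρ * (Tp + Tm) * (2 ^ (s+1) * G / (M/3*ρ))
          = 3 * 2 ^ (s+1) * cc / M * G * (Tp + Tm) := by
        field_simp
      rw [this]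
    linarith
  calc (ν B').toReal • ((ε*ρ) ^ (-s) * (Tp + Tm)) + ∫ z, g2 z ∂ν
      ≤ (2 / (ε * ρ) ^ s * (ν B').toReal + 3 * 2 ^ (s+1) * cc / M * G) * (Tp + Tm) := hfinal
    _ = (2 / (ε * ρ) ^ s * (ν B').toReal + 3 * 2 ^ (s+1) * cc / M * G) * (Tp + Tm) := rfl
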